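/- Let f and g be non-constant entire functions such that for all z, w ∈ ℂ, f(z) = f(w) implies g(z) = g(w). Then: (i) there exists an entire function H with g'(z) = H(z) · f'(z) for all z ∈ ℂ (i.e., f' divides g' in the algebra of entire functions); and (ii) for every z ∈ ℂ there exists an entire function G_z with g(w) − g(z) = (f(w) − f(z)) · G_z(w) for all w ∈ ℂ. -/

import Mathlib

open Filter Topology Set

private lemma entire_not_eventually_const {f : ℂ → ℂ} (hf : Differentiable ℂ f)
    (hfnc : ¬∃ c : ℂ, ∀ z : ℂ, f z = c) (w0 c : ℂ) : ¬ ∀ᶠ w in 𝓝 w0, f w = c := by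
  intro h
  refine hfnc ⟨c, fun z => ?_⟩
  have : f = fun _ => c :=
    AnalyticOnNhd.eq_of_eventuallyEq (Complex.analyticOnNhd_univ_iff_differentiable.mpr hf)
      (Complex.analyticOnNhd_univ_iff_differentiable.mpr (differentiable_const c))
      (h : f =ᶠ[𝓝 w0] fun _ => c)
  exact congrFun this z

private lemma analyticAt_hasStrictDerivAt {φ : ℂ → ℂ} {b : ℂ} (h : AnalyticAt ℂ φ b) :
    HasStrictDerivAt φ (deriv φ b) b := by
  obtain ⟨p, hp⟩ := h
  have h1 := hp.hasStrictDerivAt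
  rw [h1.hasDerivAt.deriv]
  exact h1

private lemma exists_kth_root {u : ℂ → ℂ} {w0 : ℂ} (hu : AnalyticAt ℂ u w0) (hu0 : u w0 ≠ 0)
    (k : ℕ) (hk : k ≠ 0) :
    ∃ ψ : ℂ → ℂ, AnalyticAt ℂ ψ w0 ∧ ψ w0 ≠ 0 ∧ ∀ᶠ w in 𝓝 w0, ψ w ^ k = u w := by
  have hkc : (k : ℂ) ≠ 0 := Nat.cast_ne_zero.mpr hk
  set c := Complex.exp (Complex.log (u w0) / k) with hc
  refine ⟨fun w => c * Complex.exp (Complex.log (u w / u w0) / (k : ℂ)), ?_, ?_, ?_⟩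
  · apply analyticAt_const.mul
    apply AnalyticAt.cexp
    apply AnalyticAt.div _ analyticAt_const hkc
    exact (hu.div analyticAt_const hu0).clog (by simp only [Pi.div_apply, div_self hu0]; exact Complex.one_mem_slitPlane)
  · simp only [div_self hu0, Complex.log_one, zero_div, Complex.exp_zero, mul_one]
    exact Complex.exp_ne_zero _
  · have : ∀ᶠ w in 𝓝 w0, u w ≠ 0 := hu.continuousAt.eventually_ne hu0
    filter_upwards [this] with w hw
    rw [mul_pow, ← Complex.exp_nat_mul, ← Complex.exp_nat_mul,
      mul_div_cancel₀ _ hkc, mul_div_cancel₀ _ hkc, Complex.exp_log hu0,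
      Complex.exp_log (div_ne_zero hw hu0), mul_div_cancel₀ _ hu0]

private lemma exists_local_inverse {φ : ℂ → ℂ} {w0 : ℂ} (hφ : AnalyticAt ℂ φ w0)
    (hd : deriv φ w0 ≠ 0) :
    ∃ ρ : ℂ → ℂ, ρ (φ w0) = w0 ∧ ContinuousAt ρ (φ w0) ∧
      (∀ᶠ w in 𝓝 w0, ρ (φ w) = w) ∧
      ∀ᶠ y in 𝓝 (φ w0), DifferentiableAt ℂ ρ y ∧ φ (ρ y) = y := by
  have hs : HasStrictDerivAt φ (deriv φ w0) w0 := analyticAt_hasStrictDerivAt hφ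
  set hF := hs.hasStrictFDerivAt_equiv hd with hFdef
  set ρ : ℂ → ℂ := hF.localInverse φ _ w0 with hρ
  have hleft : ∀ᶠ w in 𝓝 w0, ρ (φ w) = w := hF.eventually_left_inverse
  have hcont : ContinuousAt ρ (φ w0) := hF.localInverse_continuousAt
  have himg : ρ (φ w0) = w0 := hF.localInverse_apply_image
  refine ⟨ρ, himg, hcont, hleft, ?_⟩
  -- derivative of φ is analytic (hence continuous) near w0
  have hderiv_cont : ∀ᶠ x in 𝓝 w0, deriv φ x ≠ 0 := by
    obtain ⟨U, hUnhds, hUan⟩ := hφ.eventually_analyticAt.exists_mem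
    obtain ⟨V, hVU, hVopen, hV0⟩ := mem_nhds_iff.mp hUnhds
    have : ContinuousAt (deriv φ) w0 := by
      have : AnalyticOnNhd ℂ φ V := fun x hx => hUan x (hVU hx)
      exact ((this.deriv w0 hV0).continuousAt)
    exact this.eventually_ne hd
  -- an eventual set where φ is analytic with nonzero deriv and ρ is a left inverse
  obtain ⟨U, hUnhds, hU⟩ :=
    ((hφ.eventually_analyticAt.and hderiv_cont).and hleft).exists_mem
  obtain ⟨V, hVU, hVopen, hV0⟩ := mem_nhds_iff.mp hUnhds
  have hdiff : ∀ b ∈ V, DifferentiableAt ℂ ρ (φ b) := by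
    intro b hb
    have hb' := hU b (hVU hb)
    have hsb : HasStrictDerivAt φ (deriv φ b) b := analyticAt_hasStrictDerivAt hb'.1.1
    have hgb : ∀ᶠ x in 𝓝 b, ρ (φ x) = x := by
      filter_upwards [hVopen.mem_nhds hb] with x hx
      exact (hU x (hVU hx)).2
    exact (HasStrictDerivAt.hasDerivAt (hsb.to_local_left_inverse hb'.1.2 hgb)).differentiableAt
  have hmem : ∀ᶠ y in 𝓝 (φ w0), ρ y ∈ V := by
    have : Tendsto ρ (𝓝 (φ w0)) (𝓝 w0) := by
      have := hcont.tendsto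
      rwa [himg] at this
    exact this.eventually (hVopen.mem_nhds hV0)
  filter_upwards [hmem, hF.eventually_right_inverse] with y hyV hyr
  refine ⟨?_, hyr⟩
  have := hdiff (ρ y) hyV
  rwa [hyr] at this

set_option maxHeartbeats 1000000 in
private lemma key_local {f g : ℂ → ℂ} (hf : Differentiable ℂ f) (hg : Differentiable ℂ g)
    (hfnc : ¬∃ c : ℂ, ∀ z : ℂ, f z = c)
    (hfib : ∀ z w : ℂ, f z = f w → g z = g w) (w0 : ℂ) :
    ∃ H : ℂ → ℂ, AnalyticAt ℂ H 0 ∧ H 0 = 0 ∧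
      ∀ᶠ w in 𝓝 w0, g w = g w0 + H (f w - f w0) := by
  classical
  -- order factorization of f - f w0 at w0
  have hFan : AnalyticAt ℂ (fun w => f w - f w0) w0 := (hf.analyticAt w0).sub analyticAt_const
  have hne : ¬∀ᶠ w in 𝓝 w0, f w - f w0 = 0 := by
    intro h
    exact entire_not_eventually_const hf hfnc w0 (f w0)
      (h.mono fun w hw => sub_eq_zero.mp hw)
  obtain ⟨k, u, hu, hu0, hFeq⟩ := hFan.exists_eventuallyEq_pow_smul_nonzero_iff.mpr hne
  simp only [smul_eq_mul] at hFeq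
  have hk : k ≠ 0 := by
    intro hk0
    have h0 := hFeq.self_of_nhds
    simp [hk0] at h0
    exact hu0 h0.symm
  have hkc : (k : ℂ) ≠ 0 := Nat.cast_ne_zero.mpr hk
  -- k-th root of u, and φ with φ^k = f - f w0
  obtain ⟨ψ, hψan, hψ0, hψ⟩ := exists_kth_root hu hu0 k hk
  set φ : ℂ → ℂ := fun w => (w - w0) * ψ w with hφdef
  have hφan : AnalyticAt ℂ φ w0 := (analyticAt_id.sub analyticAt_const).mul hψan
  have hφ0 : φ w0 = 0 := by simp [hφdef]
  have hder : HasDerivAt φ (1 * ψ w0 + (w0 - w0) * deriv ψ w0) w0 :=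
    ((hasDerivAt_id w0).sub_const w0).mul hψan.differentiableAt.hasDerivAt
  have hd : deriv φ w0 ≠ 0 := by
    rw [hder.deriv]
    simpa using hψ0
  have hFφ : ∀ᶠ w in 𝓝 w0, f w - f w0 = φ w ^ k := by
    filter_upwards [hFeq, hψ] with w h1 h2
    rw [hφdef, mul_pow, h2]
    exact h1
  -- local inverse ρ of φ
  obtain ⟨ρ, hρ0, hρcont, hρleft, hρright⟩ := exists_local_inverse hφan hd
  rw [hφ0] at hρ0 hρcont hρright
  have hρtendsto : Tendsto ρ (𝓝 0) (𝓝 w0) := by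
    have := hρcont.tendsto; rwa [hρ0] at this
  -- a ball on which everything works
  have hev : ∀ᶠ y in 𝓝 (0 : ℂ), (DifferentiableAt ℂ ρ y ∧ φ (ρ y) = y) ∧
      (f (ρ y) - f w0 = φ (ρ y) ^ k) := hρright.and (hρtendsto.eventually hFφ)
  obtain ⟨ε, hε, hball⟩ := Metric.mem_nhds_iff.mp hev
  have hval : ∀ y ∈ Metric.ball (0 : ℂ) ε, f (ρ y) = f w0 + y ^ k := by
    intro y hy
    obtain ⟨⟨-, hri⟩, hfv⟩ := hball hy
    rw [hri] at hfv
    linear_combination hfv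
  have hS : ∀ ζ1 ∈ Metric.ball (0 : ℂ) ε, ∀ ζ2 ∈ Metric.ball (0 : ℂ) ε,
      ζ1 ^ k = ζ2 ^ k → g (ρ ζ1) = g (ρ ζ2) := by
    intro ζ1 h1 ζ2 h2 hpow
    apply hfib
    rw [hval ζ1 h1, hval ζ2 h2, hpow]
  -- the pushed-forward function
  set G : ℂ → ℂ := fun ζ => g (ρ ζ) - g w0 with hGdef
  have hG0 : G 0 = 0 := by rw [hGdef]; simp [hρ0]
  have hGdiff : ∀ ζ ∈ Metric.ball (0 : ℂ) ε, DifferentiableAt ℂ G ζ := by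
    intro ζ hζ
    exact ((hg.differentiableAt).comp ζ (hball hζ).1.1).sub_const _
  have hGcont : ContinuousAt G 0 :=
    (hGdiff 0 (Metric.mem_ball_self hε)).continuousAt
  -- the function H
  set H : ℂ → ℂ := fun ξ => if ξ = 0 then 0 else G (Complex.exp (Complex.log ξ / k)) with hHdef
  have hrootpow : ∀ ξ : ℂ, ξ ≠ 0 → (Complex.exp (Complex.log ξ / k)) ^ k = ξ := by
    intro ξ hξ
    rw [← Complex.exp_nat_mul, mul_div_cancel₀ _ hkc, Complex.exp_log hξ]
  have hrootball : ∀ ξ : ℂ, ξ ≠ 0 → ‖ξ‖ < ε ^ k →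
      Complex.exp (Complex.log ξ / k) ∈ Metric.ball (0 : ℂ) ε := by
    intro ξ hξ hn
    rw [mem_ball_zero_iff]
    apply lt_of_pow_lt_pow_left₀ k hε.le
    rw [← norm_pow, hrootpow ξ hξ]
    exact hn
  have hεk : (0 : ℝ) < ε ^ k := pow_pos hε k
  -- H is analytic at 0
  have hHan : AnalyticAt ℂ H 0 := by
    apply Complex.analyticAt_of_differentiable_on_punctured_nhds_of_continuousAt
    · -- differentiable on punctured neighborhood
      have h1 : ∀ᶠ ξ in 𝓝[≠] (0 : ℂ), ξ ≠ 0 ∧ ‖ξ‖ < ε ^ k := by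
        refine eventually_nhdsWithin_iff.mpr ?_
        filter_upwards [Metric.ball_mem_nhds (0 : ℂ) hεk] with ξ hξ hξ'
        exact ⟨hξ', by simpa [mem_ball_zero_iff] using hξ⟩
      filter_upwards [h1] with ξ0 hξ0
      obtain ⟨hξ0ne, hξ0n⟩ := hξ0
      set β : ℂ → ℂ := fun ξ =>
        Complex.exp (Complex.log ξ0 / k) * Complex.exp (Complex.log (ξ / ξ0) / k) with hβdef
      have hβan : AnalyticAt ℂ β ξ0 := by
        apply analyticAt_const.mul
        apply AnalyticAt.cexp
        apply AnalyticAt.div _ analyticAt_const hkc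
        exact (analyticAt_id.div analyticAt_const hξ0ne).clog
          (by simp only [Pi.div_apply, id_eq, div_self hξ0ne]; exact Complex.one_mem_slitPlane)
      have hβpow : ∀ᶠ ξ in 𝓝 ξ0, β ξ ^ k = ξ := by
        filter_upwards [eventually_ne_nhds hξ0ne] with ξ hξ
        rw [hβdef]
        simp only
        rw [mul_pow, ← Complex.exp_nat_mul, ← Complex.exp_nat_mul,
          mul_div_cancel₀ _ hkc, mul_div_cancel₀ _ hkc, Complex.exp_log hξ0ne,
          Complex.exp_log (div_ne_zero hξ hξ0ne), mul_div_cancel₀ _ hξ0ne]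
      have hξmem : Metric.ball (0 : ℂ) (ε ^ k) ∈ 𝓝 ξ0 :=
        Metric.isOpen_ball.mem_nhds (by simpa [mem_ball_zero_iff] using hξ0n)
      have hHβ : H =ᶠ[𝓝 ξ0] fun ξ => G (β ξ) := by
        filter_upwards [eventually_ne_nhds hξ0ne, hβpow, hξmem] with ξ hξne hβp hξn
        have hξn' : ‖ξ‖ < ε ^ k := by simpa [mem_ball_zero_iff] using hξn
        have hr1 : Complex.exp (Complex.log ξ / k) ∈ Metric.ball (0 : ℂ) ε :=
          hrootball ξ hξne hξn'
        have hr2 : β ξ ∈ Metric.ball (0 : ℂ) ε := by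
          rw [mem_ball_zero_iff]
          apply lt_of_pow_lt_pow_left₀ k hε.le
          rw [← norm_pow, hβp]
          exact hξn'
        have : G (Complex.exp (Complex.log ξ / k)) = G (β ξ) := by
          simp only [hGdef]
          rw [hS _ hr1 _ hr2 (by rw [hrootpow ξ hξne, hβp])]
        rw [hHdef]
        simp only [if_neg hξne]
        exact this
      have : DifferentiableAt ℂ (fun ξ => G (β ξ)) ξ0 := by
        have hβ0 : β ξ0 ∈ Metric.ball (0 : ℂ) ε := by
          rw [mem_ball_zero_iff]
          apply lt_of_pow_lt_pow_left₀ k hε.le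
          rw [← norm_pow, hβpow.self_of_nhds]
          exact hξ0n
        exact (hGdiff _ hβ0).comp ξ0 hβan.differentiableAt
      exact this.congr_of_eventuallyEq hHβ
    · -- continuity at 0
      rw [← continuousWithinAt_compl_self]
      have hH00 : H 0 = 0 := by rw [hHdef]; simp
      unfold ContinuousWithinAt
      rw [hH00]
      have hroot_tendsto : Tendsto (fun ξ => Complex.exp (Complex.log ξ / k))
          (𝓝[≠] (0 : ℂ)) (𝓝 0) := by
        rw [NormedAddCommGroup.tendsto_nhds_zero]
        intro η hη
        have : ∀ᶠ ξ in 𝓝[≠] (0 : ℂ), ξ ≠ 0 ∧ ‖ξ‖ < η ^ k := by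
          refine eventually_nhdsWithin_iff.mpr ?_
          filter_upwards [Metric.ball_mem_nhds (0 : ℂ) (pow_pos hη k)] with ξ hξ hξ'
          exact ⟨hξ', by simpa [mem_ball_zero_iff] using hξ⟩
        filter_upwards [this] with ξ ⟨h1, h2⟩
        apply lt_of_pow_lt_pow_left₀ k hη.le
        rw [← norm_pow, hrootpow ξ h1]
        exact h2
      have : Tendsto (fun ξ => G (Complex.exp (Complex.log ξ / k))) (𝓝[≠] (0 : ℂ)) (𝓝 0) := by
        have := hGcont.tendsto.comp hroot_tendsto
        rwa [hG0] at this
      apply this.congr'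
      filter_upwards [self_mem_nhdsWithin] with ξ (hξ : ξ ≠ 0)
      rw [hHdef]
      simp [if_neg hξ]
  refine ⟨H, hHan, by simp [hHdef], ?_⟩
  filter_upwards [hFφ, hρleft, hφan.continuousAt.tendsto.eventually
    (by rw [hφ0]; exact Metric.ball_mem_nhds (0 : ℂ) hε : Metric.ball (0:ℂ) ε ∈ 𝓝 (φ w0))]
    with w h1 h2 h3
  rw [h1]
  by_cases hw : φ w = 0
  · have : f w = f w0 := by
      have h1' := h1
      rw [hw, zero_pow hk] at h1'
      exact sub_eq_zero.mp h1'
    have := hfib w w0 this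
    rw [hw, zero_pow hk, hHdef]
    simp [this]
  · have hpk : φ w ^ k ≠ 0 := pow_ne_zero _ hw
    rw [hHdef]
    simp only [if_neg hpk]
    have hrb : Complex.exp (Complex.log (φ w ^ k) / k) ∈ Metric.ball (0 : ℂ) ε := by
      apply hrootball _ hpk
      rw [norm_pow]
      exact pow_lt_pow_left₀ (by simpa [mem_ball_zero_iff] using h3) (norm_nonneg _) hk
    have : G (Complex.exp (Complex.log (φ w ^ k) / k)) = G (φ w) := by
      simp only [hGdef]
      rw [hS _ hrb _ (Metric.mem_ball.mpr h3) (by rw [hrootpow _ hpk])]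
    rw [this, hGdef]
    simp only
    rw [h2]
    ring

private lemma key_factor {f g : ℂ → ℂ} (hf : Differentiable ℂ f) (hg : Differentiable ℂ g)
    (hfnc : ¬∃ c : ℂ, ∀ z : ℂ, f z = c)
    (hfib : ∀ z w : ℂ, f z = f w → g z = g w) (w0 : ℂ) :
    ∃ A : ℂ → ℂ, AnalyticAt ℂ A w0 ∧ ∀ᶠ w in 𝓝 w0, g w - g w0 = (f w - f w0) * A w := by
  obtain ⟨H, hHan, hH0, hHeq⟩ := key_local hf hg hfnc hfib w0
  obtain ⟨H₁, hH₁an, hH₁⟩ : ∃ H₁ : ℂ → ℂ, AnalyticAt ℂ H₁ 0 ∧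
      ∀ᶠ ξ in 𝓝 (0 : ℂ), H ξ = ξ * H₁ ξ := by
    by_cases hz : ∀ᶠ ξ in 𝓝 (0 : ℂ), H ξ = 0
    · exact ⟨fun _ => 0, analyticAt_const, hz.mono fun ξ h => by rw [h, mul_zero]⟩
    · obtain ⟨n, v, hv, hv0, hveq⟩ := hHan.exists_eventuallyEq_pow_smul_nonzero_iff.mpr hz
      simp only [smul_eq_mul, sub_zero] at hveq
      have hn : n ≠ 0 := by
        intro h0
        have h1 := hveq.self_of_nhds
        rw [h0, pow_zero, one_mul, hH0] at h1
        exact hv0 h1.symm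
      refine ⟨fun ξ => ξ ^ (n - 1) * v ξ, (analyticAt_id.pow _).mul hv, ?_⟩
      filter_upwards [hveq] with ξ h
      have hξn : ξ ^ n = ξ * ξ ^ (n - 1) := by
        conv_lhs => rw [← Nat.succ_pred_eq_of_pos (Nat.pos_of_ne_zero hn)]
        rw [pow_succ', Nat.pred_eq_sub_one]
      rw [h, hξn, mul_assoc]
  have hct : Tendsto (fun w => f w - f w0) (𝓝 w0) (𝓝 0) := by
    have h0 : ContinuousAt (fun w : ℂ => f w - f w0) w0 :=
      (hf.continuous.sub continuous_const).continuousAt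
    have := h0.tendsto
    rwa [sub_self] at this
  refine ⟨fun w => H₁ (f w - f w0), ?_, ?_⟩
  · have h1 : AnalyticAt ℂ H₁ ((fun w : ℂ => f w - f w0) w0) := by simpa using hH₁an
    exact AnalyticAt.comp (g := H₁) (f := fun w : ℂ => f w - f w0) h1
      ((hf.analyticAt w0).sub analyticAt_const)
  · filter_upwards [hHeq, hct.eventually hH₁] with w e1 e2
    linear_combination e1 + e2

private lemma key_deriv {f g : ℂ → ℂ} (hf : Differentiable ℂ f) (hg : Differentiable ℂ g)
    (hfnc : ¬∃ c : ℂ, ∀ z : ℂ, f z = c)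
    (hfib : ∀ z w : ℂ, f z = f w → g z = g w) (w0 : ℂ) :
    ∃ A : ℂ → ℂ, AnalyticAt ℂ A w0 ∧ ∀ᶠ w in 𝓝 w0, deriv g w = deriv f w * A w := by
  obtain ⟨H, hHan, hH0, hHeq⟩ := key_local hf hg hfnc hfib w0
  have hct : Tendsto (fun w => f w - f w0) (𝓝 w0) (𝓝 0) := by
    have h0 : ContinuousAt (fun w : ℂ => f w - f w0) w0 :=
      (hf.continuous.sub continuous_const).continuousAt
    have := h0.tendsto
    rwa [sub_self] at this
  have hderivH : AnalyticAt ℂ (deriv H) 0 := by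
    obtain ⟨U, hUmem, hUan⟩ := hHan.eventually_analyticAt.exists_mem
    obtain ⟨V, hVU, hVopen, hV0⟩ := mem_nhds_iff.mp hUmem
    exact (AnalyticOnNhd.deriv fun x hx => hUan x (hVU hx)) 0 hV0
  refine ⟨fun w => deriv H (f w - f w0), ?_, ?_⟩
  · have h1 : AnalyticAt ℂ (deriv H) ((fun w : ℂ => f w - f w0) w0) := by simpa using hderivH
    exact AnalyticAt.comp (g := deriv H) (f := fun w : ℂ => f w - f w0) h1
      ((hf.analyticAt w0).sub analyticAt_const)
  · obtain ⟨S, hSmem, hS⟩ := (hHeq.and (hct.eventually hHan.eventually_analyticAt)).exists_mem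
    obtain ⟨O, hOS, hOopen, hO0⟩ := mem_nhds_iff.mp hSmem
    filter_upwards [hOopen.mem_nhds hO0] with w hw
    have hgloc : g =ᶠ[𝓝 w] fun w' => g w0 + H (f w' - f w0) :=
      eventually_of_mem (hOopen.mem_nhds hw) fun x hx => (hS x (hOS hx)).1
    have hinner : HasDerivAt (fun w' => f w' - f w0) (deriv f w) w :=
      (hf.differentiableAt.hasDerivAt).sub_const _
    have hHd : HasDerivAt H (deriv H (f w - f w0)) (f w - f w0) :=
      ((hS w (hOS hw)).2.differentiableAt).hasDerivAt
    have hcomp : HasDerivAt (fun w' => g w0 + H (f w' - f w0))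
        (deriv H (f w - f w0) * deriv f w) w := (hHd.comp w hinner).const_add _
    rw [hgloc.deriv_eq, hcomp.deriv]
    ring

private lemma glue {φ ψ : ℂ → ℂ}
    (hψ : ∀ w : ℂ, ∀ᶠ x in 𝓝[≠] w, ψ x ≠ 0)
    (hloc : ∀ w0 : ℂ, ∃ A : ℂ → ℂ, AnalyticAt ℂ A w0 ∧ ∀ᶠ w in 𝓝 w0, φ w = ψ w * A w) :
    ∃ G : ℂ → ℂ, Differentiable ℂ G ∧ ∀ w : ℂ, φ w = ψ w * G w := by
  choose A hAan hAeq using hloc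
  have uniq : ∀ (w1 : ℂ) (B C : ℂ → ℂ), ContinuousAt B w1 → ContinuousAt C w1 →
      (∀ᶠ w in 𝓝 w1, φ w = ψ w * B w) → (∀ᶠ w in 𝓝 w1, φ w = ψ w * C w) → B w1 = C w1 := by
    intro w1 B C hB hC hBe hCe
    have hBC : B =ᶠ[𝓝[≠] w1] C := by
      filter_upwards [hψ w1, hBe.filter_mono nhdsWithin_le_nhds,
        hCe.filter_mono nhdsWithin_le_nhds] with x hx h1 h2
      exact mul_left_cancel₀ hx (h1.symm.trans h2)
    exact tendsto_nhds_unique_of_eventuallyEq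
      hB.continuousWithinAt.tendsto hC.continuousWithinAt.tendsto hBC
  refine ⟨fun w => A w w, fun w0 => ?_, fun w => (hAeq w).self_of_nhds⟩
  obtain ⟨S, hSmem, hS⟩ := (((hAan w0).eventually_analyticAt).and (hAeq w0)).exists_mem
  obtain ⟨O, hOS, hOopen, hO0⟩ := mem_nhds_iff.mp hSmem
  have hGA : (fun w => A w w) =ᶠ[𝓝 w0] A w0 := by
    filter_upwards [hOopen.mem_nhds hO0] with w1 hw1
    exact uniq w1 (A w1) (A w0) (hAan w1).continuousAt (hS w1 (hOS hw1)).1.continuousAt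
      (hAeq w1) (eventually_of_mem (hOopen.mem_nhds hw1) fun x hx => (hS x (hOS hx)).2)
  exact ((hAan w0).differentiableAt).congr_of_eventuallyEq hGA



/-- If `f` and `g` are non-constant entire functions such that the fibers of
`f` refine the fibers of `g`, then (i) `f'` divides `g'` in the algebra of entire functions,
and (ii) for every `z`, `f(w) - f(z)` divides `g(w) - g(z)` as entire functions of `w`. -/
theorem deriv_divides_of_fiber_refinement (f g : ℂ → ℂ)
    (hf : Differentiable ℂ f) (hg : Differentiable ℂ g)
    (hfnc : ¬∃ c : ℂ, ∀ z : ℂ, f z = c) (hgnc : ¬∃ c : ℂ, ∀ z : ℂ, g z = c)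
    (hfib : ∀ z w : ℂ, f z = f w → g z = g w) :
    (∃ H : ℂ → ℂ, Differentiable ℂ H ∧ ∀ z : ℂ, deriv g z = H z * deriv f z) ∧
    (∀ z : ℂ, ∃ G : ℂ → ℂ, Differentiable ℂ G ∧
      ∀ w : ℂ, g w - g z = (f w - f z) * G w) := by
  constructor
  · -- part (i)
    have hψ : ∀ w1 : ℂ, ∀ᶠ x in 𝓝[≠] w1, deriv f x ≠ 0 := by
      intro w1
      have hfan : AnalyticOnNhd ℂ f univ := Complex.analyticOnNhd_univ_iff_differentiable.mpr hf
      have han : AnalyticAt ℂ (deriv f) w1 := hfan.deriv w1 (mem_univ _)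
      rcases han.eventually_eq_zero_or_eventually_ne_zero with h | h
      · exfalso
        have hdf : Differentiable ℂ (deriv f) :=
          Complex.analyticOnNhd_univ_iff_differentiable.mp hfan.deriv
        have : deriv f = fun _ => (0 : ℂ) :=
          AnalyticOnNhd.eq_of_eventuallyEq (Complex.analyticOnNhd_univ_iff_differentiable.mpr hdf)
            (Complex.analyticOnNhd_univ_iff_differentiable.mpr (differentiable_const 0)) h
        exact hfnc ⟨f 0, fun z => is_const_of_deriv_eq_zero hf (fun x => congrFun this x) z 0⟩
      · exact h
    obtain ⟨G, hGdiff, hGid⟩ := glue hψ (fun w0 => key_deriv hf hg hfnc hfib w0)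
    exact ⟨G, hGdiff, fun z => by rw [hGid z, mul_comm]⟩
  · -- part (ii)
    intro z
    have hψ : ∀ w1 : ℂ, ∀ᶠ x in 𝓝[≠] w1, f x - f z ≠ 0 := by
      intro w1
      have han : AnalyticAt ℂ (fun x => f x - f z) w1 := (hf.analyticAt w1).sub analyticAt_const
      rcases han.eventually_eq_zero_or_eventually_ne_zero with h | h
      · exact absurd (h.mono fun x hx => sub_eq_zero.mp hx)
          (entire_not_eventually_const hf hfnc w1 (f z))
      · exact h
    have hloc : ∀ w0 : ℂ, ∃ A : ℂ → ℂ, AnalyticAt ℂ A w0 ∧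
        ∀ᶠ w in 𝓝 w0, g w - g z = (f w - f z) * A w := by
      intro w0
      by_cases hfz : f w0 = f z
      · have hg0 : g w0 = g z := hfib w0 z hfz
        obtain ⟨A, hAan, hAeq⟩ := key_factor hf hg hfnc hfib w0
        refine ⟨A, hAan, ?_⟩
        filter_upwards [hAeq] with w h
        rw [← hg0, ← hfz]
        exact h
      · refine ⟨fun w => (g w - g z) / (f w - f z),
          ((hg.analyticAt w0).sub analyticAt_const).div
            ((hf.analyticAt w0).sub analyticAt_const) (sub_ne_zero.mpr hfz), ?_⟩
        filter_upwards [(hf.continuous.continuousAt).eventually_ne hfz] with w hw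
        rw [mul_comm, div_mul_cancel₀ _ (sub_ne_zero.mpr hw)]
    exact glue hψ hloc
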